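/- Let V be a finite-dimensional real inner product space and φ an alternating p-form of comass one on V. There exists a mollifying Laplacian for φ (a symmetric positive-definite endomorphism A of V such that ⟨A,H⟩ ≥ 0 for every symmetric endomorphism H of V satisfying tr_ξ H ≥ 0 for all φ-planes ξ ∈ G(φ)) if and only if φ is elliptic, i.e. for every nonzero v ∈ V there is a φ-plane ξ ∈ G(φ) with P_ξ v ≠ 0. (Theorem 3.4, pointwise/parallel form) -/

import Mathlib

open scoped RealInnerProductSpace

noncomputable section

variable {V : Type*} [NormedAddCommGroup V] [InnerProductSpace ℝ V] [FiniteDimensional ℝ V]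

/-- The orthogonal projection of `V` onto `span{e₁,…,e_p}`, as a linear endomorphism. -/
def projL {p : ℕ} (e : Fin p → V) : V →ₗ[ℝ] V :=
  (Submodule.span ℝ (Set.range e)).subtype ∘ₗ
    (Submodule.orthogonalProjectionOnto (Submodule.span ℝ (Set.range e))).toLinearMap

/-- rank-one map `x ↦ ⟪u,x⟫ • w`. -/
def rk (u w : V) : V →ₗ[ℝ] V where
  toFun x := ⟪u, x⟫ • w
  map_add' x y := by simp [inner_add_right, add_smul]
  map_smul' c x := by simp [inner_smul_right, mul_smul]

@[simp] lemma rk_apply (u w x : V) : rk u w x = ⟪u, x⟫ • w := rfl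

lemma trace_rk (u w : V) : LinearMap.trace ℝ V (rk u w) = ⟪u, w⟫ := by
  let b := stdOrthonormalBasis ℝ V
  rw [LinearMap.trace_eq_matrix_trace ℝ b.toBasis, Matrix.trace]
  have hdiag : ∀ i, (LinearMap.toMatrix b.toBasis b.toBasis (rk u w)).diag i
      = ⟪u, b i⟫ * ⟪b i, w⟫ := by
    intro i
    rw [Matrix.diag_apply, LinearMap.toMatrix_apply]
    simp [rk, OrthonormalBasis.coe_toBasis, OrthonormalBasis.coe_toBasis_repr_apply,
      OrthonormalBasis.repr_apply_apply, inner_smul_right]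
  simp_rw [hdiag]
  exact b.sum_inner_mul_inner u w

lemma projL_eq_sum {p : ℕ} {e : Fin p → V} (he : Orthonormal ℝ e) :
    projL e = ∑ j, rk (e j) (e j) := by
  classical
  set K := Submodule.span ℝ (Set.range e) with hK
  have li := he.linearIndependent
  let bb : Module.Basis (Fin p) ℝ K := Module.Basis.span li
  have hbb : ∀ i, (bb i : V) = e i := fun i => congrArg Subtype.val (Module.Basis.span_apply li i)
  have hon : Orthonormal ℝ bb := by
    have h2 := orthonormal_span he
    have : bb = fun i => (⟨e i, Submodule.subset_span (Set.mem_range_self i)⟩ : K) := by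
      funext i; exact Subtype.ext (hbb i)
    rw [this]; exact h2
  let b : OrthonormalBasis (Fin p) ℝ K := bb.toOrthonormalBasis hon
  have hb : ∀ i, (b i : V) = e i := by
    intro i
    have : b i = bb i := by
      simp [b, Module.Basis.coe_toOrthonormalBasis]
    rw [this, hbb]
  ext x
  have := b.orthogonalProjectionOnto_apply_eq_sum x
  calc projL e x = ((K.orthogonalProjectionOnto x : K) : V) := rfl
    _ = ∑ j, ⟪(b j : V), x⟫ • (b j : V) := by
        rw [this]; push_cast; rfl
    _ = (∑ j, rk (e j) (e j)) x := by
        simp [hb, LinearMap.sum_apply]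

lemma projL_isSymmetric {p : ℕ} (e : Fin p → V) : (projL e).IsSymmetric :=
  Submodule.starProjection_isSymmetric _

lemma trace_projL_comp {p : ℕ} {e : Fin p → V} (he : Orthonormal ℝ e)
    {H : V →ₗ[ℝ] V} (hH : H.IsSymmetric) :
    LinearMap.trace ℝ V (projL e ∘ₗ H) = ∑ j, ⟪e j, H (e j)⟫ := by
  rw [projL_eq_sum he]
  have hsc : (∑ j, rk (e j) (e j)) ∘ₗ H = ∑ j, (rk (e j) (e j) ∘ₗ H) := by
    ext x; simp [LinearMap.sum_apply]
  rw [hsc, map_sum]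
  refine Finset.sum_congr rfl fun j _ => ?_
  have : rk (e j) (e j) ∘ₗ H = rk (H (e j)) (e j) := by
    ext x; simp [hH (e j) x]
  rw [this, trace_rk, real_inner_comm]

lemma inner_projL_self {p : ℕ} {e : Fin p → V} (he : Orthonormal ℝ e) (v : V) :
    ⟪v, projL e v⟫ = ∑ j, ⟪e j, v⟫ ^ 2 := by
  rw [projL_eq_sum he]
  simp [LinearMap.sum_apply, inner_sum, inner_smul_right, real_inner_comm v, sq]


/-- Theorem 3.4 (pointwise/parallel form): there exists a mollifying Laplacian for `φ`
(a symmetric positive-definite endomorphism `A` with `⟨A,H⟩ = tr(A∘H) ≥ 0` for every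
symmetric `H` whose `ξ`-trace is nonnegative on all `φ`-planes `ξ`) if and only if `φ` is
elliptic (for every `v ≠ 0` there is a `φ`-plane `ξ` with `P_ξ v ≠ 0`). -/
theorem exists_mollifying_laplacian_iff_elliptic {p : ℕ} (hp : 1 ≤ p)
    (φ : V [⋀^Fin p]→ₗ[ℝ] ℝ)
    (hcomass : ∀ e : Fin p → V, Orthonormal ℝ e → φ e ≤ 1) :
    (∃ A : V →ₗ[ℝ] V, A.IsSymmetric ∧ (∀ v : V, v ≠ 0 → 0 < ⟪v, A v⟫) ∧
      ∀ H : V →ₗ[ℝ] V, H.IsSymmetric →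
        (∀ e : Fin p → V, Orthonormal ℝ e → φ e = 1 → 0 ≤ ∑ j, ⟪e j, H (e j)⟫) →
        0 ≤ LinearMap.trace ℝ V (A ∘ₗ H)) ↔
    (∀ v : V, v ≠ 0 → ∃ e : Fin p → V, Orthonormal ℝ e ∧ φ e = 1 ∧ projL e v ≠ 0) := by
  classical
  constructor
  · rintro ⟨A, hAsym, hApos, hAmoll⟩ v hv
    by_contra hcon
    push_neg at hcon
    set H : V →ₗ[ℝ] V := -(rk v v) with hHdef
    have hHsym : H.IsSymmetric := by
      intro x y
      simp only [hHdef, LinearMap.neg_apply, rk_apply, inner_neg_left, inner_neg_right,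
        inner_smul_left, inner_smul_right, RCLike.star_def, starRingEnd_apply, star_trivial]
      rw [real_inner_comm x v]
      ring
    have htr : ∀ e : Fin p → V, Orthonormal ℝ e → φ e = 1 → 0 ≤ ∑ j, ⟪e j, H (e j)⟫ := by
      intro e he h1
      have h0 : projL e v = 0 := hcon e he h1
      have hz0 : ⟪v, projL e v⟫ = 0 := by rw [h0, inner_zero_right]
      rw [inner_projL_self he] at hz0
      have hz : ∀ j : Fin p, ⟪e j, v⟫ = 0 := by
        intro j
        have := (Finset.sum_eq_zero_iff_of_nonneg
          (fun j _ => sq_nonneg (⟪e j, v⟫))).1 hz0 j (Finset.mem_univ j)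
        exact pow_eq_zero_iff two_ne_zero |>.1 this
      have : ∀ j : Fin p, ⟪e j, H (e j)⟫ = 0 := by
        intro j
        have hz' : ⟪v, e j⟫ = 0 := by rw [real_inner_comm]; exact hz j
        simp [hHdef, rk_apply, inner_smul_right, hz']
      simp [this]
    have hAH : A ∘ₗ H = -(rk v (A v)) := by
      ext x
      simp [hHdef, rk_apply, map_smul]
    have h1 := hAmoll H hHsym htr
    rw [hAH, map_neg, trace_rk] at h1
    have h2 := hApos v hv
    linarith
  · intro hell
    set S : Set V := {x | ∃ e : Fin p → V, Orthonormal ℝ e ∧ φ e = 1 ∧ x ∈ Set.range e}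
      with hSdef
    have hS' : ∀ x : V, x ∈ S ↔
        ∃ e : Fin p → V, Orthonormal ℝ e ∧ φ e = 1 ∧ x ∈ Set.range e := fun x => Iff.rfl
    have hspan : Submodule.span ℝ S = ⊤ := by
      by_contra hne
      have hob : (Submodule.span ℝ S)ᗮ ≠ ⊥ := fun h =>
        hne (Submodule.orthogonal_eq_bot_iff.1 h)
      obtain ⟨v, hvmem, hv0⟩ := Submodule.ne_bot_iff _ |>.1 hob
      obtain ⟨e, he, h1, hnz⟩ := hell v hv0
      refine hnz ?_
      have hz : ∀ j : Fin p, ⟪e j, v⟫ = 0 := by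
        intro j
        exact (Submodule.mem_orthogonal _ v).1 hvmem (e j)
          (Submodule.subset_span ((hS' (e j)).2 ⟨e, he, h1, Set.mem_range_self j⟩))
      rw [projL_eq_sum he]
      simp [LinearMap.sum_apply, hz]
    obtain ⟨b, hbS, hbspan, hbli⟩ := exists_linearIndependent ℝ S
    have hbfin : b.Finite := hbli.setFinite
    set t : Finset V := hbfin.toFinset with htdef
    set F : V → Fin p → V :=
      fun x => if h : x ∈ S then ((hS' x).1 h).choose else fun _ => 0 with hFdef
    have hF : ∀ x ∈ S, Orthonormal ℝ (F x) ∧ φ (F x) = 1 ∧ x ∈ Set.range (F x) := by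
      intro x hx
      simp only [hFdef, dif_pos hx]
      exact ((hS' x).1 hx).choose_spec
    have htS : ∀ x ∈ t, x ∈ S := by
      intro x hx
      exact hbS (hbfin.mem_toFinset.1 hx)
    refine ⟨∑ x ∈ t, projL (F x), ?_, ?_, ?_⟩
    · intro x y
      simp only [LinearMap.sum_apply, sum_inner, inner_sum]
      exact Finset.sum_congr rfl fun w _ => projL_isSymmetric (F w) x y
    · intro v hv
      have hterm : ∀ x ∈ t, 0 ≤ ⟪v, projL (F x) v⟫ := by
        intro x hx
        rw [inner_projL_self (hF x (htS x hx)).1]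
        exact Finset.sum_nonneg fun j _ => sq_nonneg _
      have hsum : ⟪v, (∑ x ∈ t, projL (F x)) v⟫ = ∑ x ∈ t, ⟪v, projL (F x) v⟫ := by
        simp [LinearMap.sum_apply, inner_sum]
      rcases lt_or_eq_of_le (Finset.sum_nonneg hterm) with h | h
      · rw [hsum]; exact h
      · exfalso
        have hzero : ∀ x ∈ t, ⟪v, projL (F x) v⟫ = 0 := by
          intro x hx
          exact (Finset.sum_eq_zero_iff_of_nonneg hterm).1 h.symm x hx
        have hxv : ∀ x ∈ t, ⟪x, v⟫ = 0 := by
          intro x hx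
          have h2 := hzero x hx
          rw [inner_projL_self (hF x (htS x hx)).1] at h2
          obtain ⟨j, hj⟩ := (hF x (htS x hx)).2.2
          have := (Finset.sum_eq_zero_iff_of_nonneg
            (fun j _ => sq_nonneg (⟪F x j, v⟫))).1 h2 j (Finset.mem_univ j)
          rw [hj] at this
          exact pow_eq_zero_iff two_ne_zero |>.1 this
        have hvbot : v ∈ (Submodule.span ℝ b)ᗮ := by
          have h1 : Submodule.span ℝ b ≤ (ℝ ∙ v)ᗮ := by
            rw [Submodule.span_le]
            intro u hu
            exact Submodule.mem_orthogonal_singleton_iff_inner_left.2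
              (hxv u (hbfin.mem_toFinset.2 hu))
          have h2 : (ℝ ∙ v)ᗮᗮ ≤ (Submodule.span ℝ b)ᗮ := Submodule.orthogonal_le h1
          exact h2 (Submodule.le_orthogonal_orthogonal _
            (Submodule.mem_span_singleton_self v))
        rw [hbspan, hspan, Submodule.top_orthogonal_eq_bot] at hvbot
        exact hv (Submodule.mem_bot ℝ |>.1 hvbot)
    · intro H hHsym hHtr
      have hcomp : (∑ x ∈ t, projL (F x)) ∘ₗ H = ∑ x ∈ t, (projL (F x) ∘ₗ H) := by
        ext x; simp [LinearMap.sum_apply]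
      rw [hcomp, map_sum]
      refine Finset.sum_nonneg fun x hx => ?_
      rw [trace_projL_comp (hF x (htS x hx)).1 hHsym]
      exact hHtr (F x) (hF x (htS x hx)).1 (hF x (htS x hx)).2.1
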